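/- arXiv:2008.05422 — 8 statements merged into one kernel-verified Lean document; each statement's English description precedes it below -/
import Mathlib

section
/- Let p, q, r be real numbers with p, q, r ≥ 2 and 1/p + 1/q + 1/r < 1. Then E(p,q,r) = cos(π/r) + cos(π/p)·cos(π/q) satisfies E(p,q,r) > sin(π/p)·sin(π/q) > 0 (so that λ(p,q,r) is a well-defined real number), and λ(p,q,r) > 1. -/
open Real

/-- `E(p,q,r) = cos(π/r) + cos(π/p)·cos(π/q)`. -/
noncomputable def triE (p q r : ℝ) : ℝ :=
  Real.cos (π / r) + Real.cos (π / p) * Real.cos (π / q)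

/-- `λ(p,q,r) = (E + √(E² − sin²(π/p)·sin²(π/q)))/(sin(π/p)·sin(π/q))`. -/
noncomputable def triLambda (p q r : ℝ) : ℝ :=
  (triE p q r +
      Real.sqrt ((triE p q r) ^ 2 - (Real.sin (π / p)) ^ 2 * (Real.sin (π / q)) ^ 2)) /
    (Real.sin (π / p) * Real.sin (π / q))

theorem stmt_0 (p q r : ℝ) (hp : 2 ≤ p) (hq : 2 ≤ q) (hr : 2 ≤ r)
    (h : 1 / p + 1 / q + 1 / r < 1) :
    triE p q r > Real.sin (π / p) * Real.sin (π / q) ∧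
      Real.sin (π / p) * Real.sin (π / q) > 0 ∧
      triLambda p q r > 1 := by
  have hπ := Real.pi_pos
  have hp0 : (0:ℝ) < p := by linarith
  have hq0 : (0:ℝ) < q := by linarith
  have hr0 : (0:ℝ) < r := by linarith
  have hap : 0 < π / p := div_pos hπ hp0
  have haq : 0 < π / q := div_pos hπ hq0
  have har : 0 < π / r := div_pos hπ hr0
  have hp2 : π / p ≤ π / 2 := by gcongr
  have hq2 : π / q ≤ π / 2 := by gcongr
  have hsinp : 0 < Real.sin (π / p) :=
    Real.sin_pos_of_pos_of_lt_pi hap (by linarith)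
  have hsinq : 0 < Real.sin (π / q) :=
    Real.sin_pos_of_pos_of_lt_pi haq (by linarith)
  have hs : 0 < Real.sin (π / p) * Real.sin (π / q) := mul_pos hsinp hsinq
  have key : π / p + π / q + π / r < π := by
    have h' := mul_lt_mul_of_pos_left h hπ
    rw [mul_add, mul_add, mul_one_div, mul_one_div, mul_one_div, mul_one] at h'
    exact h'
  have hcos : Real.cos (π - π / r) < Real.cos (π / p + π / q) :=
    Real.cos_lt_cos_of_nonneg_of_le_pi (by positivity) (by linarith) (by linarith)
  rw [Real.cos_pi_sub, Real.cos_add] at hcos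
  have hE : Real.sin (π / p) * Real.sin (π / q) < triE p q r := by
    unfold triE; linarith
  refine ⟨hE, hs, ?_⟩
  rw [triLambda, gt_iff_lt, lt_div_iff₀ hs, one_mul]
  have := Real.sqrt_nonneg ((triE p q r) ^ 2 -
    (Real.sin (π / p)) ^ 2 * (Real.sin (π / q)) ^ 2)
  linarith
end

section
/- Let p, q, r be integers with p, q, r ≥ 2 and 1/p + 1/q + 1/r < 1, let λ = λ(p,q,r), let A, B be the associated SL(2,ℝ) matrices, and let C = B⁻¹A⁻¹. Then |tr(C)| = 2cos(π/r) < 2 (so C is elliptic), and the image of C in PSL(2,ℝ) = SL(2,ℝ)/{±I} has order exactly r. -/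
open Real Matrix
open scoped MatrixGroups

private lemma ch2 (M : Matrix (Fin 2) (Fin 2) ℝ) :
    M * M = M.trace • M - M.det • 1 := by
  ext i j
  fin_cases i <;> fin_cases j <;>
    simp [mul_apply, trace, det_fin_two, Fin.sum_univ_two, Matrix.one_apply] <;> ring

private lemma rot_pow (θ : ℝ) (J : Matrix (Fin 2) (Fin 2) ℝ) (hJ : J * J = -1) (n : ℕ) :
    (Real.cos θ • 1 + Real.sin θ • J) ^ n
      = Real.cos (n * θ) • 1 + Real.sin (n * θ) • J := by
  induction n with
  | zero => simp
  | succ n ih =>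
    rw [pow_succ, ih]
    push_cast
    rw [show ((n : ℝ) + 1) * θ = ↑n * θ + θ by ring, Real.cos_add, Real.sin_add]
    simp only [add_mul, mul_add, smul_mul_assoc, mul_smul_comm, hJ, smul_smul,
      mul_one, one_mul]
    module

private lemma kk_sq (M : Matrix (Fin 2) (Fin 2) ℝ) (e : ℝ) :
    (M + e • 1) * (M + e • 1) = M * M + (2 * e) • M + (e * e) • 1 := by
  simp only [add_mul, mul_add, smul_mul_assoc, mul_smul_comm, smul_smul, one_mul, mul_one]
  module

private lemma jj_neg_one (K : Matrix (Fin 2) (Fin 2) ℝ) (e : ℝ) (he : e ≠ 0)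
    (hKK : K * K = (-(e ^ 2)) • 1) : (e⁻¹ • K) * (e⁻¹ • K) = -1 := by
  rw [smul_mul_smul_comm, hKK, smul_smul,
    show e⁻¹ * e⁻¹ * (-(e ^ 2)) = (-1 : ℝ) by field_simp,
    neg_smul, one_smul]

set_option maxHeartbeats 2000000 in
theorem stmt_7 (p q r : ℤ) (hp : 2 ≤ p) (hq : 2 ≤ q) (hr : 2 ≤ r)
    (h : 1 / (p : ℝ) + 1 / (q : ℝ) + 1 / (r : ℝ) < 1)
    (A B : SL(2, ℝ))
    (hA : (A : Matrix (Fin 2) (Fin 2) ℝ) =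
      !![Real.cos (π / p), -Real.sin (π / p); Real.sin (π / p), Real.cos (π / p)])
    (hB : (B : Matrix (Fin 2) (Fin 2) ℝ) =
      !![Real.cos (π / q), -(triLambda p q r)⁻¹ * Real.sin (π / q);
         triLambda p q r * Real.sin (π / q), Real.cos (π / q)]) :
    |Matrix.trace ((B⁻¹ * A⁻¹ : SL(2, ℝ)) : Matrix (Fin 2) (Fin 2) ℝ)| = 2 * Real.cos (π / r) ∧
      2 * Real.cos (π / r) < 2 ∧
      orderOf (QuotientGroup.mk (B⁻¹ * A⁻¹) : SL(2, ℝ) ⧸ Subgroup.center SL(2, ℝ)) = r := by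
  have hpi := Real.pi_pos
  have hp' : (2:ℝ) ≤ (p:ℝ) := by exact_mod_cast hp
  have hq' : (2:ℝ) ≤ (q:ℝ) := by exact_mod_cast hq
  have hr' : (2:ℝ) ≤ (r:ℝ) := by exact_mod_cast hr
  have hp0 : (0:ℝ) < p := by linarith
  have hq0 : (0:ℝ) < q := by linarith
  have hr0 : (0:ℝ) < r := by linarith
  set a := π / (p:ℝ) with ha₀
  set b := π / (q:ℝ) with hb₀
  set c := π / (r:ℝ) with hc₀
  have ha0 : 0 < a := div_pos hpi hp0
  have hb0 : 0 < b := div_pos hpi hq0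
  have hc0 : 0 < c := div_pos hpi hr0
  have ha2 : a ≤ π/2 := by rw [ha₀]; gcongr
  have hb2 : b ≤ π/2 := by rw [hb₀]; gcongr
  have hc2 : c ≤ π/2 := by rw [hc₀]; gcongr
  have habc : a + b + c < π := by
    have h2 := mul_lt_mul_of_pos_left h hpi
    rw [mul_one] at h2
    calc a + b + c = π * (1/(p:ℝ) + 1/(q:ℝ) + 1/(r:ℝ)) := by
          rw [ha₀, hb₀, hc₀]; ring
      _ < π := h2
  have hsa : 0 < Real.sin a := Real.sin_pos_of_pos_of_lt_pi ha0 (by linarith)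
  have hsb : 0 < Real.sin b := Real.sin_pos_of_pos_of_lt_pi hb0 (by linarith)
  have hsc : 0 < Real.sin c := Real.sin_pos_of_pos_of_lt_pi hc0 (by linarith)
  have hca : 0 ≤ Real.cos a := Real.cos_nonneg_of_mem_Icc ⟨by linarith, ha2⟩
  have hcb : 0 ≤ Real.cos b := Real.cos_nonneg_of_mem_Icc ⟨by linarith, hb2⟩
  have hcc : 0 ≤ Real.cos c := Real.cos_nonneg_of_mem_Icc ⟨by linarith, hc2⟩
  have hcc1 : Real.cos c < 1 := by
    calc Real.cos c < Real.cos 0 :=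
          Real.cos_lt_cos_of_nonneg_of_le_pi le_rfl (by linarith) hc0
      _ = 1 := Real.cos_zero
  set E : ℝ := Real.cos c + Real.cos a * Real.cos b with hE₀
  set s : ℝ := Real.sin a * Real.sin b with hs₀
  have hs : 0 < s := mul_pos hsa hsb
  have hEs : s < E := by
    have h1 : Real.cos (π - c) < Real.cos (a + b) :=
      Real.cos_lt_cos_of_nonneg_of_le_pi (by linarith) (by linarith) (by linarith)
    rw [Real.cos_pi_sub, Real.cos_add] at h1
    rw [hE₀, hs₀]; linarith
  have hEps : 0 < E + s := by
    have h1 : 0 < Real.cos (a - b) :=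
      Real.cos_pos_of_mem_Ioo ⟨by linarith, by linarith⟩
    rw [Real.cos_sub] at h1
    rw [hE₀, hs₀]; linarith
  set D : ℝ := E^2 - Real.sin a ^ 2 * Real.sin b ^ 2 with hD₀
  have hD : 0 < D := by rw [hD₀]; nlinarith
  have hsqrt : Real.sqrt D ^ 2 = D := Real.sq_sqrt hD.le
  have hsqrt0 : 0 ≤ Real.sqrt D := Real.sqrt_nonneg D
  have hEdef : triE (p:ℝ) (q:ℝ) (r:ℝ) = E := by
    rw [triE, ← ha₀, ← hb₀, ← hc₀, hE₀]
  have hLdef : triLambda (p:ℝ) (q:ℝ) (r:ℝ) = (E + Real.sqrt D) / s := by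
    rw [triLambda, ← ha₀, ← hb₀, hEdef, ← hD₀, ← hs₀]
  set L : ℝ := (E + Real.sqrt D) / s with hL₀
  have hL : 0 < L := div_pos (by linarith) hs
  have h2 : Real.sqrt D ^ 2 = E^2 - Real.sin a ^ 2 * Real.sin b ^ 2 := by rw [hsqrt, hD₀]
  have key : (E + Real.sqrt D) * (E - Real.sqrt D) = s * s := by
    rw [hs₀]; linear_combination -h2
  have hLinv : L⁻¹ = (E - Real.sqrt D) / s := by
    apply inv_eq_of_mul_eq_one_right
    rw [hL₀, div_mul_div_comm, key]
    exact div_self (mul_pos hs hs).ne'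
  have hLsum : (L + L⁻¹) * s = 2 * E := by
    rw [hLinv, hL₀, ← add_div, show (E + Real.sqrt D) + (E - Real.sqrt D) = 2*E by ring]
    exact div_mul_cancel₀ _ hs.ne'
  -- the matrix of C = B⁻¹ A⁻¹
  rw [hLdef] at hB
  have hAinv : ((A⁻¹ : SL(2,ℝ)) : Matrix (Fin 2) (Fin 2) ℝ) =
      !![Real.cos a, Real.sin a; -Real.sin a, Real.cos a] := by
    rw [Matrix.SpecialLinearGroup.coe_inv, hA, adjugate_fin_two]
    norm_num
  have hBinv : ((B⁻¹ : SL(2,ℝ)) : Matrix (Fin 2) (Fin 2) ℝ) =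
      !![Real.cos b, L⁻¹ * Real.sin b; -(L * Real.sin b), Real.cos b] := by
    rw [Matrix.SpecialLinearGroup.coe_inv, hB, adjugate_fin_two]
    norm_num
  have hC : ((B⁻¹ * A⁻¹ : SL(2,ℝ)) : Matrix (Fin 2) (Fin 2) ℝ) =
      !![Real.cos b * Real.cos a - L⁻¹ * Real.sin b * Real.sin a,
         Real.cos b * Real.sin a + L⁻¹ * Real.sin b * Real.cos a;
         -(L * Real.sin b * Real.cos a) - Real.cos b * Real.sin a,
         -(L * Real.sin b * Real.sin a) + Real.cos b * Real.cos a] := by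
    rw [Matrix.SpecialLinearGroup.coe_mul, hBinv, hAinv, Matrix.mul_fin_two]
    congr 1 <;> ring
  have htr : Matrix.trace ((B⁻¹ * A⁻¹ : SL(2,ℝ)) : Matrix (Fin 2) (Fin 2) ℝ)
      = -(2 * Real.cos c) := by
    rw [hC, Matrix.trace_fin_two_of]
    linear_combination (-1 : ℝ) * hLsum + (L + L⁻¹) * hs₀ + (-2 : ℝ) * hE₀
  refine ⟨by rw [htr, abs_neg, abs_of_nonneg (by linarith)], by linarith, ?_⟩
  -- order part
  have hdet : det ((B⁻¹ * A⁻¹ : SL(2,ℝ)) : Matrix (Fin 2) (Fin 2) ℝ) = 1 :=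
    Matrix.SpecialLinearGroup.det_coe _
  set M := ((B⁻¹ * A⁻¹ : SL(2,ℝ)) : Matrix (Fin 2) (Fin 2) ℝ) with hM₀
  set J : Matrix (Fin 2) (Fin 2) ℝ := (Real.sin c)⁻¹ • (M + Real.cos c • 1) with hJ₀
  clear_value M J
  have hMJ : M = Real.cos (π - c) • 1 + Real.sin (π - c) • J := by
    rw [Real.cos_pi_sub, Real.sin_pi_sub, hJ₀, smul_smul, mul_inv_cancel₀ hsc.ne', one_smul]
    module
  have hch := ch2 M
  rw [htr, hdet] at hch
  have hpyth := Real.sin_sq_add_cos_sq c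
  have hKK : (M + Real.cos c • 1) * (M + Real.cos c • 1)
      = (-(Real.sin c ^ 2)) • 1 := by
    rw [kk_sq, hch]
    match_scalars
    all_goals linarith [hpyth]
  have hJJ : J * J = -1 := by
    rw [hJ₀]
    exact jj_neg_one _ _ hsc.ne' hKK
  have hpow : ∀ n : ℕ, (((B⁻¹ * A⁻¹)^n : SL(2,ℝ)) : Matrix (Fin 2) (Fin 2) ℝ)
      = Real.cos (n*(π - c)) • 1 + Real.sin (n*(π - c)) • J := fun n => by
    rw [Matrix.SpecialLinearGroup.coe_pow, ← hM₀, hMJ, rot_pow _ J hJJ n]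
  have hM10 : M 1 0 = -(L * Real.sin b * Real.cos a) - Real.cos b * Real.sin a := by
    rw [hC]; simp
  have hp2q2 : 2 < (p:ℝ) ∨ 2 < (q:ℝ) := by
    by_contra hcon
    push_neg at hcon
    obtain ⟨h1, h2⟩ := hcon
    rw [le_antisymm h1 hp', le_antisymm h2 hq'] at h
    have h3 : 0 < 1/(r:ℝ) := by positivity
    norm_num at h
    linarith
  have hpq : 0 < Real.cos a ∨ 0 < Real.cos b := by
    rcases hp2q2 with h1 | h1
    · left
      apply Real.cos_pos_of_mem_Ioo
      refine ⟨by linarith, ?_⟩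
      rw [ha₀]
      exact div_lt_div_of_pos_left hpi (by norm_num) h1
    · right
      apply Real.cos_pos_of_mem_Ioo
      refine ⟨by linarith, ?_⟩
      rw [hb₀]
      exact div_lt_div_of_pos_left hpi (by norm_num) h1
  have hM10neg : M 1 0 < 0 := by
    rw [hM10]
    rcases hpq with h1 | h1
    · have t1 : 0 < L * Real.sin b * Real.cos a := mul_pos (mul_pos hL hsb) h1
      have t2 : 0 ≤ Real.cos b * Real.sin a := mul_nonneg hcb hsa.le
      linarith
    · have t1 : 0 ≤ L * Real.sin b * Real.cos a :=
        mul_nonneg (mul_nonneg hL.le hsb.le) hca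
      have t2 : 0 < Real.cos b * Real.sin a := mul_pos h1 hsa
      linarith
  have hJ10 : J 1 0 < 0 := by
    rw [hJ₀]
    have : ((Real.sin c)⁻¹ • (M + Real.cos c • 1)) 1 0
        = (Real.sin c)⁻¹ * (M 1 0 + Real.cos c * (0:ℝ)) := by
      simp [Matrix.smul_apply, Matrix.add_apply, Matrix.one_apply]
    rw [this, mul_zero, add_zero]
    exact mul_neg_of_pos_of_neg (inv_pos.2 hsc) hM10neg
  have hrn : ((r.toNat : ℤ)) = r := Int.toNat_of_nonneg (by omega)
  have hrnR : ((r.toNat : ℝ)) = (r:ℝ) := by exact_mod_cast hrn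
  have hrc : (r.toNat : ℝ) * c = π := by
    rw [hrnR, hc₀]
    field_simp
  have key1 : (QuotientGroup.mk (B⁻¹ * A⁻¹) : SL(2, ℝ) ⧸ Subgroup.center SL(2, ℝ)) ^ r.toNat
      = 1 := by
    rw [← QuotientGroup.mk_pow, QuotientGroup.eq_one_iff]
    apply Matrix.SpecialLinearGroup.mem_center_iff.mpr
    refine ⟨-(-1)^r.toNat, ?_, ?_⟩
    · rw [Fintype.card_fin]
      rcases neg_one_pow_eq_or ℝ r.toNat with h1 | h1 <;> rw [h1] <;> norm_num
    · rw [Matrix.scalar_apply, ← Matrix.smul_one_eq_diagonal, hpow r.toNat, mul_sub,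
        Real.cos_nat_mul_pi_sub, Real.sin_nat_mul_pi_sub, hrc, Real.cos_pi, Real.sin_pi]
      match_scalars <;> ring
  have key2 : ∀ n : ℕ, 0 < n → n < r.toNat →
      (QuotientGroup.mk (B⁻¹ * A⁻¹) : SL(2, ℝ) ⧸ Subgroup.center SL(2, ℝ)) ^ n ≠ 1 := by
    intro n hn1 hn2 hcon
    rw [← QuotientGroup.mk_pow, QuotientGroup.eq_one_iff] at hcon
    obtain ⟨y, hy1, hy2⟩ := Matrix.SpecialLinearGroup.mem_center_iff.mp hcon
    have h10 := congrFun (congrFun hy2 1) 0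
    rw [Matrix.scalar_apply, Matrix.diagonal_apply_ne _ (by norm_num), hpow n] at h10
    have hRHS : (Real.cos (n*(π - c)) • (1 : Matrix (Fin 2) (Fin 2) ℝ)
        + Real.sin (n*(π - c)) • J) 1 0 = Real.sin (n*(π - c)) * J 1 0 := by
      simp [Matrix.smul_apply, Matrix.add_apply, Matrix.one_apply]
    rw [hRHS] at h10
    have hsnc : 0 < Real.sin (n * c) := by
      apply Real.sin_pos_of_pos_of_lt_pi
      · positivity
      · rw [← hrc]
        have hlt : (n:ℝ) < (r.toNat:ℝ) := by exact_mod_cast hn2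
        exact mul_lt_mul_of_pos_right hlt hc0
    have hsin : Real.sin ((n:ℝ)*(π - c)) ≠ 0 := by
      rw [mul_sub, Real.sin_nat_mul_pi_sub]
      rcases neg_one_pow_eq_or ℝ n with h1 | h1 <;> rw [h1]
      · linarith
      · simp; linarith
    exact hsin (by
      rcases mul_eq_zero.mp h10.symm with h2 | h2
      · exact h2
      · exact absurd h2 hJ10.ne)
  have hdvd : orderOf (QuotientGroup.mk (B⁻¹ * A⁻¹) : SL(2, ℝ) ⧸ Subgroup.center SL(2, ℝ))
      ∣ r.toNat := orderOf_dvd_of_pow_eq_one key1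
  have hpos : 0 < orderOf (QuotientGroup.mk (B⁻¹ * A⁻¹) :
      SL(2, ℝ) ⧸ Subgroup.center SL(2, ℝ)) :=
    orderOf_pos_iff.mpr (isOfFinOrder_iff_pow_eq_one.mpr ⟨r.toNat, by omega, key1⟩)
  have hle : orderOf (QuotientGroup.mk (B⁻¹ * A⁻¹) :
      SL(2, ℝ) ⧸ Subgroup.center SL(2, ℝ)) ≤ r.toNat := Nat.le_of_dvd (by omega) hdvd
  have heq : orderOf (QuotientGroup.mk (B⁻¹ * A⁻¹) :
      SL(2, ℝ) ⧸ Subgroup.center SL(2, ℝ)) = r.toNat := by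
    by_contra hne
    exact key2 _ hpos (by omega) (pow_orderOf_eq_one _)
  rw [heq]
  exact hrn
end

section
/- Let p, q, r be real numbers with p, q, r ≥ 2 and 1/p + 1/q + 1/r < 1, let λ = λ(p,q,r), let A, B be the associated SL(2,ℝ) matrices, and let C = B⁻¹A⁻¹. Then the following trace formulas hold: |tr(BA⁻¹)| = 2(2cos(π/p)cos(π/q) + cos(π/r)), |tr(BC⁻¹)| = 2(2cos(π/q)cos(π/r) + cos(π/p)), and |tr(AC⁻¹)| = 2(2cos(π/p)cos(π/r) + cos(π/q)). -/
open Real Matrix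

/-- The matrix `A` associated to the `(p,q,r)`-triangle group. -/
noncomputable def triA (p : ℝ) : Matrix (Fin 2) (Fin 2) ℝ :=
  !![Real.cos (π / p), -Real.sin (π / p); Real.sin (π / p), Real.cos (π / p)]

/-- The matrix `B` associated to the `(p,q,r)`-triangle group. -/
noncomputable def triB (q lam : ℝ) : Matrix (Fin 2) (Fin 2) ℝ :=
  !![Real.cos (π / q), -lam⁻¹ * Real.sin (π / q); lam * Real.sin (π / q), Real.cos (π / q)]

set_option maxHeartbeats 1000000 in
theorem stmt_8 (p q r : ℝ) (hp : 2 ≤ p) (hq : 2 ≤ q) (hr : 2 ≤ r)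
    (h : 1 / p + 1 / q + 1 / r < 1)
    (A B C : Matrix (Fin 2) (Fin 2) ℝ)
    (hA : A = triA p) (hB : B = triB q (triLambda p q r)) (hC : C = B⁻¹ * A⁻¹) :
    |(B * A⁻¹).trace| = 2 * (2 * Real.cos (π / p) * Real.cos (π / q) + Real.cos (π / r)) ∧
      |(B * C⁻¹).trace| = 2 * (2 * Real.cos (π / q) * Real.cos (π / r) + Real.cos (π / p)) ∧
      |(A * C⁻¹).trace| = 2 * (2 * Real.cos (π / p) * Real.cos (π / r) + Real.cos (π / q)) := by
  have hpi := Real.pi_pos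
  set a := π / p with ha
  set b := π / q with hb
  set c := π / r with hc
  have hp0 : (0:ℝ) < p := lt_of_lt_of_le two_pos hp
  have hq0 : (0:ℝ) < q := lt_of_lt_of_le two_pos hq
  have hr0 : (0:ℝ) < r := lt_of_lt_of_le two_pos hr
  have ha0 : 0 < a := div_pos hpi hp0
  have hb0 : 0 < b := div_pos hpi hq0
  have hc0 : 0 < c := div_pos hpi hr0
  have ha2 : a ≤ π / 2 := by
    rw [ha, div_le_div_iff₀ hp0 two_pos]
    nlinarith
  have hb2 : b ≤ π / 2 := by
    rw [hb, div_le_div_iff₀ hq0 two_pos]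
    nlinarith
  have hc2 : c ≤ π / 2 := by
    rw [hc, div_le_div_iff₀ hr0 two_pos]
    nlinarith
  have hsum : a + b + c < π := by
    have : π * (1/p) + π * (1/q) + π * (1/r) < π * 1 := by
      have := mul_lt_mul_of_pos_left h hpi
      linarith [this]
    rw [ha, hb, hc]
    rw [div_eq_mul_one_div π p, div_eq_mul_one_div π q, div_eq_mul_one_div π r]
    linarith
  -- positivity of sines / nonnegativity of cosines
  have hs1 : 0 < Real.sin a := Real.sin_pos_of_pos_of_lt_pi ha0 (lt_of_le_of_lt ha2 (by linarith))
  have hs2 : 0 < Real.sin b := Real.sin_pos_of_pos_of_lt_pi hb0 (lt_of_le_of_lt hb2 (by linarith))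
  have hc1 : 0 ≤ Real.cos a := Real.cos_nonneg_of_mem_Icc ⟨by linarith, ha2⟩
  have hc2' : 0 ≤ Real.cos b := Real.cos_nonneg_of_mem_Icc ⟨by linarith, hb2⟩
  have hc3 : 0 ≤ Real.cos c := Real.cos_nonneg_of_mem_Icc ⟨by linarith, hc2⟩
  -- key: E > sin a * sin b
  have hE : Real.sin a * Real.sin b < triE p q r := by
    have hlt : Real.cos (π - (a + b)) < Real.cos c :=
      Real.cos_lt_cos_of_nonneg_of_le_pi (le_of_lt hc0) (by linarith) (by linarith)
    rw [Real.cos_pi_sub, Real.cos_add] at hlt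
    have : Real.sin a * Real.sin b - Real.cos a * Real.cos b < Real.cos c := by linarith
    rw [triE, ← ha, ← hb, ← hc]
    linarith
  set E := triE p q r with hEdef
  have hss : 0 < Real.sin a * Real.sin b := mul_pos hs1 hs2
  have hE0 : 0 < E := lt_trans hss hE
  set D := E ^ 2 - (Real.sin a) ^ 2 * (Real.sin b) ^ 2 with hD
  have hD0 : 0 ≤ D := by nlinarith
  have hsq : Real.sqrt D ^ 2 = D := Real.sq_sqrt hD0
  have hsqnn : 0 ≤ Real.sqrt D := Real.sqrt_nonneg D
  set lam := triLambda p q r with hlam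
  have hlameq : lam = (E + Real.sqrt D) / (Real.sin a * Real.sin b) := by
    rw [hlam, triLambda, ← ha, ← hb, ← hEdef, ← hD]
  have hlam0 : 0 < lam := by
    rw [hlameq]
    exact div_pos (by linarith) hss
  have hinv : lam * lam⁻¹ = 1 := mul_inv_cancel₀ (ne_of_gt hlam0)
  have hlaminv : lam⁻¹ = (E - Real.sqrt D) / (Real.sin a * Real.sin b) := by
    apply inv_eq_of_mul_eq_one_right
    rw [hlameq]
    field_simp
    linear_combination -hsq
  have hkey : Real.sin a * Real.sin b * lam + Real.sin a * Real.sin b * lam⁻¹ = 2 * E := by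
    rw [hlaminv]
    have h1 : Real.sin a * Real.sin b * lam = E + Real.sqrt D := by
      rw [hlameq]; field_simp
    rw [h1]
    field_simp
    ring
  rw [hEdef, triE, ← ha, ← hb, ← hc] at hkey hE
  have hEpos : 0 < Real.cos c + Real.cos a * Real.cos b := lt_trans hss hE
  clear_value lam E D a b c
  -- explicit inverses
  have pyth1 : Real.sin a ^ 2 + Real.cos a ^ 2 = 1 := Real.sin_sq_add_cos_sq a
  have pyth2 : Real.sin b ^ 2 + Real.cos b ^ 2 = 1 := Real.sin_sq_add_cos_sq b
  obtain ⟨A', hA'⟩ : ∃ M : Matrix (Fin 2) (Fin 2) ℝ,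
      M = !![Real.cos a, Real.sin a; -Real.sin a, Real.cos a] := ⟨_, rfl⟩
  obtain ⟨B', hB'⟩ : ∃ M : Matrix (Fin 2) (Fin 2) ℝ,
      M = !![Real.cos b, lam⁻¹ * Real.sin b; -(lam * Real.sin b), Real.cos b] := ⟨_, rfl⟩
  have hAA' : A * A' = 1 := by
    rw [hA, triA, ← ha, hA']
    ext i j
    fin_cases i <;> fin_cases j <;>
      simp [Matrix.mul_apply, Fin.sum_univ_two, Matrix.one_apply] <;>
      first
      | ring1
      | linear_combination pyth1
  have hBB' : B * B' = 1 := by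
    rw [hB, triB, ← hb, hB']
    ext i j
    fin_cases i <;> fin_cases j <;>
      simp [Matrix.mul_apply, Fin.sum_univ_two, Matrix.one_apply] <;>
      first
      | ring1
      | linear_combination pyth2 + Real.sin b ^ 2 * hinv
  have hA'A : A' * A = 1 := by
    rw [hA, triA, ← ha, hA']
    ext i j
    fin_cases i <;> fin_cases j <;>
      simp [Matrix.mul_apply, Fin.sum_univ_two, Matrix.one_apply] <;>
      first
      | ring1
      | linear_combination pyth1
  have hB'B : B' * B = 1 := by
    rw [hB, triB, ← hb, hB']
    ext i j
    fin_cases i <;> fin_cases j <;>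
      simp [Matrix.mul_apply, Fin.sum_univ_two, Matrix.one_apply] <;>
      first
      | ring1
      | linear_combination pyth2 + Real.sin b ^ 2 * hinv
  have hAinv : A⁻¹ = A' := Matrix.inv_eq_right_inv hAA'
  have hBinv : B⁻¹ = B' := Matrix.inv_eq_right_inv hBB'
  have hCinv : C⁻¹ = A * B := by
    apply Matrix.inv_eq_right_inv
    rw [hC, hAinv, hBinv, Matrix.mul_assoc, ← Matrix.mul_assoc A' A, hA'A, Matrix.one_mul, hB'B]
  refine ⟨?_, ?_, ?_⟩
  · have ht : (B * A⁻¹).trace = 2 * (2 * Real.cos a * Real.cos b + Real.cos c) := by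
      rw [hAinv, hB, triB, ← hb, hA', Matrix.trace]
      simp [Matrix.mul_apply, Fin.sum_univ_two, Matrix.diag]
      linear_combination hkey
    rw [ht, abs_of_nonneg]
    nlinarith [mul_nonneg hc1 hc2']
  · have ht : (B * C⁻¹).trace = -(2 * (2 * Real.cos b * Real.cos c + Real.cos a)) := by
      rw [hCinv, hA, triA, hB, triB, ← ha, ← hb, Matrix.trace]
      simp [Matrix.mul_apply, Fin.sum_univ_two, Matrix.diag]
      linear_combination (-2 * Real.cos b) * hkey + (-2 * Real.cos a * Real.sin b ^ 2) * hinv +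
        (-2 * Real.cos a) * pyth2
    rw [ht, abs_neg, abs_of_nonneg]
    nlinarith [mul_nonneg hc2' hc3]
  · have ht : (A * C⁻¹).trace = -(2 * (2 * Real.cos a * Real.cos c + Real.cos b)) := by
      rw [hCinv, ← Matrix.mul_assoc, hA, triA, hB, triB, ← ha, ← hb, Matrix.trace]
      simp [Matrix.mul_apply, Fin.sum_univ_two, Matrix.diag]
      linear_combination (-2 * Real.cos a) * hkey + (-2 * Real.cos b) * pyth1
    rw [ht, abs_neg, abs_of_nonneg]
    nlinarith [mul_nonneg hc1 hc3]
end

section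
/- Let q, r be real numbers with q ≥ 3 and r ≥ 4, let λ = λ(3,q,r), and let A, B be the SL(2,ℝ) matrices associated to (3,q,r). Then tr(BA⁻¹) = 2(cos(π/q) + cos(π/r)) ≥ 1 + √2 > 2; in particular the element BA⁻¹ of the (3,q,r)-triangle group is hyperbolic. -/
open Real Matrix

set_option maxHeartbeats 1000000 in
theorem stmt_9 (q r : ℝ) (hq : 3 ≤ q) (hr : 4 ≤ r) :
    (triB q (triLambda 3 q r) * (triA 3)⁻¹).trace =
        2 * (Real.cos (π / q) + Real.cos (π / r)) ∧
      1 + Real.sqrt 2 ≤ 2 * (Real.cos (π / q) + Real.cos (π / r)) ∧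
      2 < 1 + Real.sqrt 2 := by
  have hq0 : (0:ℝ) < q := by linarith
  have hr0 : (0:ℝ) < r := by linarith
  have hπ : (0:ℝ) < π := Real.pi_pos
  have hπq0 : 0 < π / q := div_pos hπ hq0
  have hπq3 : π / q ≤ π / 3 := by
    apply div_le_div_of_nonneg_left hπ.le (by norm_num) hq
  have hπr4 : π / r ≤ π / 4 := by
    apply div_le_div_of_nonneg_left hπ.le (by norm_num) hr
  have hπr0 : 0 < π / r := div_pos hπ hr0
  have hcq : Real.cos (π / 3) ≤ Real.cos (π / q) :=
    Real.cos_le_cos_of_nonneg_of_le_pi hπq0.le (by linarith) hπq3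
  have hcq' : (1:ℝ)/2 ≤ Real.cos (π / q) := by rwa [Real.cos_pi_div_three] at hcq
  have hcr : Real.cos (π / 4) ≤ Real.cos (π / r) :=
    Real.cos_le_cos_of_nonneg_of_le_pi hπr0.le (by linarith) hπr4
  have hcr' : Real.sqrt 2 / 2 ≤ Real.cos (π / r) := by
    rwa [Real.cos_pi_div_four] at hcr
  have hsq2 : (1:ℝ) < Real.sqrt 2 := by
    nlinarith [Real.sq_sqrt (by norm_num : (0:ℝ) ≤ 2), Real.sqrt_nonneg 2]
  have hsq : 0 < Real.sin (π / q) :=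
    Real.sin_pos_of_pos_of_lt_pi hπq0 (by nlinarith)
  have hsp : Real.sin (π / 3) = Real.sqrt 3 / 2 := Real.sin_pi_div_three
  have hsp0 : 0 < Real.sin (π / 3) := by
    rw [hsp]; positivity
  set s : ℝ := Real.sin (π / 3) * Real.sin (π / q) with hsdef
  have hs0 : 0 < s := mul_pos hsp0 hsq
  set E : ℝ := triE 3 q r with hEdef
  have hEs : s < E := by
    have hadd : Real.cos (π / 3 + π / q) =
        Real.cos (π / 3) * Real.cos (π / q) - Real.sin (π / 3) * Real.sin (π / q) :=
      Real.cos_add _ _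
    have h1 : Real.cos (2 * π / 3) ≤ Real.cos (π / 3 + π / q) :=
      Real.cos_le_cos_of_nonneg_of_le_pi (by positivity) (by linarith) (by linarith)
    have h2 : Real.cos (2 * π / 3) = -(1/2 : ℝ) := by
      have h3 : (2:ℝ) * π / 3 = π - π / 3 := by ring
      rw [h3, Real.cos_pi_sub, Real.cos_pi_div_three]
    rw [h2] at h1
    have h4 : E - s = Real.cos (π / r) + Real.cos (π / 3 + π / q) := by
      rw [hEdef, hadd, hsdef]; simp only [triE]; ring
    nlinarith [Real.sqrt_nonneg 2, hsq2]
  have hE0 : 0 < E := lt_of_le_of_lt hs0.le hEs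
  set D : ℝ := E ^ 2 - (Real.sin (π / 3)) ^ 2 * (Real.sin (π / q)) ^ 2 with hDdef
  have hsD : s ^ 2 = E ^ 2 - D := by rw [hDdef, hsdef]; ring
  have hD0 : 0 ≤ D := by nlinarith
  have hsqD : Real.sqrt D ^ 2 = D := Real.sq_sqrt hD0
  have hsqDnn : 0 ≤ Real.sqrt D := Real.sqrt_nonneg D
  set lam : ℝ := triLambda 3 q r with hlamdef
  have hlam_eq : lam = (E + Real.sqrt D) / s := by
    rw [hlamdef, triLambda, ← hEdef, ← hDdef, ← hsdef]
  have hlam0 : 0 < lam := by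
    rw [hlam_eq]; exact div_pos (by linarith) hs0
  have hEDne : E + Real.sqrt D ≠ 0 := by positivity
  have hlaminv : lam⁻¹ = (E - Real.sqrt D) / s := by
    rw [hlam_eq, inv_div, div_eq_div_iff hEDne hs0.ne']
    linear_combination hsD + hsqD
  have hAinv : (triA 3)⁻¹ =
      !![Real.cos (π / 3), Real.sin (π / 3); -Real.sin (π / 3), Real.cos (π / 3)] := by
    apply Matrix.inv_eq_right_inv
    have h3 : Real.sqrt 3 * Real.sqrt 3 = 3 := Real.mul_self_sqrt (by norm_num)
    ext i j
    fin_cases i <;> fin_cases j <;>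
      simp [triA, Matrix.mul_apply, Fin.sum_univ_two, Matrix.one_apply,
        div_mul_div_comm, h3] <;>
      ring
  have key : lam * (Real.sin (π / 3) * Real.sin (π / q)) +
      lam⁻¹ * (Real.sin (π / 3) * Real.sin (π / q)) = 2 * E := by
    rw [hlaminv, hlam_eq, ← hsdef, div_mul_cancel₀ _ hs0.ne', div_mul_cancel₀ _ hs0.ne']
    ring
  have hEval : E = Real.cos (π / r) + 1 / 2 * Real.cos (π / q) := by
    rw [hEdef]; simp only [triE]; rw [Real.cos_pi_div_three]
  refine ⟨?_, by linarith, by linarith⟩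
  rw [hAinv, triB, Matrix.trace_fin_two]
  simp only [Matrix.mul_apply, Fin.sum_univ_two, Matrix.of_apply, Matrix.cons_val',
    Matrix.cons_val_zero, Matrix.cons_val_one, Matrix.head_cons, Matrix.empty_val',
    Matrix.cons_val_fin_one, Matrix.head_fin_const]
  rw [Real.cos_pi_div_three]
  linear_combination key + 2 * hEval
end

section
/- Let q, r be real numbers with q ≥ 3 and r ≥ 4, and let λ = λ(3,q,r). Then the (1,2) entry of the matrix BA⁻¹, namely b = (√3/2)·cos(π/q) − (1/2)·λ⁻¹·sin(π/q), is strictly positive; equivalently, √3·λ·cos(π/q) > sin(π/q). -/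
open Real Matrix

theorem stmt_10 (q r : ℝ) (hq : 3 ≤ q) (hr : 4 ≤ r) :
    (Real.sqrt 3 / 2) * Real.cos (π / q) - (1 / 2) * (triLambda 3 q r)⁻¹ * Real.sin (π / q) > 0 ∧
      Real.sqrt 3 * triLambda 3 q r * Real.cos (π / q) > Real.sin (π / q) := by
  have hπ : (0:ℝ) < π := Real.pi_pos
  have hq0 : (0:ℝ) < q := by linarith
  have hr0 : (0:ℝ) < r := by linarith
  have hπq0 : 0 < π / q := by positivity
  have hπq3 : π / q ≤ π / 3 := by
    apply div_le_div_of_nonneg_left hπ.le (by norm_num) hq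
  have hπr4 : π / r ≤ π / 4 := by
    apply div_le_div_of_nonneg_left hπ.le (by norm_num) hr
  have hπqπ : π / q < π := lt_of_le_of_lt hπq3 (by linarith)
  have hsq : 0 < Real.sin (π / q) := Real.sin_pos_of_pos_of_lt_pi hπq0 hπqπ
  have hcq : 1 / 2 ≤ Real.cos (π / q) := by
    have := Real.cos_le_cos_of_nonneg_of_le_pi hπq0.le (by linarith) hπq3
    rwa [Real.cos_pi_div_three] at this
  have hcr : Real.sqrt 2 / 2 ≤ Real.cos (π / r) := by
    have h0 : 0 < π / r := by positivity
    have := Real.cos_le_cos_of_nonneg_of_le_pi h0.le (by linarith) hπr4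
    rwa [Real.cos_pi_div_four] at this
  have hsqrt2 : (1:ℝ) < Real.sqrt 2 := by
    nlinarith [Real.sq_sqrt (by norm_num : (0:ℝ) ≤ 2), Real.sqrt_nonneg 2]
  have hE : triE 3 q r = Real.cos (π / r) + (1/2) * Real.cos (π / q) := by
    rw [triE, Real.cos_pi_div_three]
  have hEpos : 0 < triE 3 q r := by rw [hE]; nlinarith
  -- key inequality
  have hpyth : Real.sin (π / q) ^ 2 + Real.cos (π / q) ^ 2 = 1 := Real.sin_sq_add_cos_sq _
  have hkey : Real.sin (π / q) ^ 2 < 2 * triE 3 q r * Real.cos (π / q) := by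
    rw [hE]; nlinarith
  set N := triE 3 q r +
      Real.sqrt ((triE 3 q r) ^ 2 - (Real.sin (π / 3)) ^ 2 * (Real.sin (π / q)) ^ 2) with hN
  have hNE : triE 3 q r ≤ N := le_add_of_nonneg_right (Real.sqrt_nonneg _)
  have hs3 : Real.sin (π / 3) = Real.sqrt 3 / 2 := Real.sin_pi_div_three
  have hsqrt3 : Real.sqrt 3 ^ 2 = 3 := Real.sq_sqrt (by norm_num)
  have hsqrt3pos : 0 < Real.sqrt 3 := Real.sqrt_pos.mpr (by norm_num)
  have hd : 0 < Real.sin (π / 3) * Real.sin (π / q) := by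
    rw [hs3]; positivity
  have hlam : triLambda 3 q r = N / (Real.sin (π / 3) * Real.sin (π / q)) := rfl
  have hlampos : 0 < triLambda 3 q r := by
    rw [hlam]
    exact div_pos (lt_of_lt_of_le hEpos hNE) hd
  have h2 : Real.sqrt 3 * triLambda 3 q r * Real.cos (π / q) > Real.sin (π / q) := by
    rw [hlam, hs3]
    rw [gt_iff_lt, show Real.sqrt 3 * (N / (Real.sqrt 3 / 2 * Real.sin (π / q))) *
        Real.cos (π / q) = (Real.sqrt 3 * N * Real.cos (π / q)) /
        (Real.sqrt 3 / 2 * Real.sin (π / q)) by ring, lt_div_iff₀ (by positivity)]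
    have hcq0 : 0 < Real.cos (π / q) := by linarith
    nlinarith [mul_le_mul_of_nonneg_right hNE hcq0.le]
  refine ⟨?_, h2⟩
  have heq : (Real.sqrt 3 / 2) * Real.cos (π / q) - (1 / 2) * (triLambda 3 q r)⁻¹ *
      Real.sin (π / q) =
      (Real.sqrt 3 * triLambda 3 q r * Real.cos (π / q) - Real.sin (π / q)) /
      (2 * triLambda 3 q r) := by
    field_simp
  rw [heq]
  apply div_pos (by linarith) (by linarith)
end

section
/- Let q, r be real numbers with q ≥ 3 and r ≥ 4, let λ = λ(3,q,r), and let b = (√3/2)·cos(π/q) − (1/2)·λ⁻¹·sin(π/q) and c = (1/2)·λ·sin(π/q) − (√3/2)·cos(π/q) be the (1,2) and (2,1) entries of BA⁻¹. Then b ≤ c if and only if cos(π/q) ≤ cos(π/r); in particular, if 3 ≤ q ≤ r then 0 < b ≤ c, with b = c if and only if q = r. Consequently the axis of the hyperbolic element BA⁻¹ crosses the imaginary axis at the point t·i with t = √(b/c) ≤ 1, and t = 1 if and only if q = r. -/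
open Real Matrix

lemma stmt_11_aux (cq cr : ℝ) (hcq : 1/2 ≤ cq) (hcr : 1/2 < cr) :
    (cr - cq)^2 < cr^2 + cr*cq + cq^2 - 3/4 := by nlinarith

lemma stmt_11_aux' (cq cr : ℝ) (hcq : 1/2 ≤ cq) (hcr : 1/2 < cr) :
    (cq - cr)^2 < cr^2 + cr*cq + cq^2 - 3/4 := by nlinarith

set_option maxHeartbeats 2000000 in
theorem stmt_11 (q r : ℝ) (hq : 3 ≤ q) (hr : 4 ≤ r)
    (b c : ℝ)
    (hb : b = (Real.sqrt 3 / 2) * Real.cos (π / q) - (1 / 2) * (triLambda 3 q r)⁻¹ * Real.sin (π / q))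
    (hc : c = (1 / 2) * triLambda 3 q r * Real.sin (π / q) - (Real.sqrt 3 / 2) * Real.cos (π / q)) :
    (b ≤ c ↔ Real.cos (π / q) ≤ Real.cos (π / r)) ∧
      (q ≤ r →
        0 < b ∧ b ≤ c ∧ (b = c ↔ q = r) ∧
          Real.sqrt (b / c) ≤ 1 ∧ (Real.sqrt (b / c) = 1 ↔ q = r)) := by
  have hπ := Real.pi_pos
  have hq0 : (0:ℝ) < q := by linarith
  have hr0 : (0:ℝ) < r := by linarith
  have hπq0 : 0 < π / q := div_pos hπ hq0
  have hπr0 : 0 < π / r := div_pos hπ hr0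
  have hπq3 : π / q ≤ π / 3 := by gcongr
  have hπr4 : π / r ≤ π / 4 := by gcongr
  have hπqπ : π / q < π := div_lt_self hπ (by linarith)
  have hπrπ : π / r < π := div_lt_self hπ (by linarith)
  set s := Real.sin (π / q) with hs_def
  set cq := Real.cos (π / q) with hcq_def
  set cr := Real.cos (π / r) with hcr_def
  have hs : 0 < s := Real.sin_pos_of_pos_of_lt_pi hπq0 hπqπ
  have hcq : 1/2 ≤ cq := by
    rw [hcq_def, show (1:ℝ)/2 = Real.cos (π/3) from (Real.cos_pi_div_three).symm]
    exact Real.cos_le_cos_of_nonneg_of_le_pi hπq0.le (by linarith) hπq3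
  have h12 : (1:ℝ) < Real.sqrt 2 := by
    rw [show (1:ℝ) = Real.sqrt 1 by simp]
    exact Real.sqrt_lt_sqrt (by norm_num) (by norm_num)
  have hcr : 1/2 < cr := by
    have h4 : Real.sqrt 2 / 2 ≤ cr := by
      rw [hcr_def, show Real.sqrt 2 / 2 = Real.cos (π/4) from (Real.cos_pi_div_four).symm]
      exact Real.cos_le_cos_of_nonneg_of_le_pi hπr0.le (by linarith) hπr4
    linarith
  have hpyth : s ^ 2 + cq ^ 2 = 1 := Real.sin_sq_add_cos_sq (π / q)
  set s3 := Real.sqrt 3 with hs3_def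
  have hs3 : s3 ^ 2 = 3 := Real.sq_sqrt (by norm_num)
  have hs3pos : 0 < s3 := Real.sqrt_pos.mpr (by norm_num)
  set E : ℝ := cr + (1/2) * cq with hE_def
  have hE : triE 3 q r = E := by
    simp [triE, Real.cos_pi_div_three, hE_def, hcq_def, hcr_def]
  set D : ℝ := E ^ 2 - (3/4) * s ^ 2 with hD_def
  have hDeq : D = cr^2 + cr*cq + cq^2 - 3/4 := by
    rw [hD_def, hE_def]; linear_combination (-(3:ℝ)/4) * hpyth
  have hD0 : 0 < D := by
    rw [hDeq]
    have h1 := stmt_11_aux cq cr hcq hcr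
    have h2 := sq_nonneg (cr - cq)
    linarith
  have hsD : Real.sqrt D ^ 2 = D := Real.sq_sqrt hD0.le
  have hsDpos : 0 < Real.sqrt D := Real.sqrt_pos.mpr hD0
  set L := triLambda 3 q r with hL_def
  have hLform : L = (E + Real.sqrt D) / (s3 / 2 * s) := by
    rw [hL_def, triLambda, hE, Real.sin_pi_div_three]
    rw [show ((s3/2) ^ 2 * s ^ 2 : ℝ) = (3/4) * s^2 by rw [div_pow, hs3]; ring]
  have hEpos : 0 < E := by rw [hE_def]; linarith
  have hLpos : 0 < L := by
    rw [hLform]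
    exact div_pos (by positivity) (by positivity)
  have hLinv : L⁻¹ = (E - Real.sqrt D) / (s3 / 2 * s) := by
    refine inv_eq_of_mul_eq_one_right ?_
    rw [hLform]
    field_simp
    linear_combination (-4 : ℝ) * hsD + (-4) * hD_def + (-(s^2)) * hs3
  have hb' : b = (Real.sqrt D - (cr - cq)) / s3 := by
    rw [hb, hLinv]
    field_simp
    linear_combination cq * hs3 + (-2*s*s3) * hE_def
  have hc' : c = (Real.sqrt D + (cr - cq)) / s3 := by
    rw [hc, hLform]
    field_simp
    linear_combination (-cq) * hs3 + (2*s*s3) * hE_def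
  have hcb : c - b = (cr - cq) * (2 / s3) := by
    rw [hb', hc']; ring
  have hmain : b ≤ c ↔ cq ≤ cr := by
    rw [← sub_nonneg, hcb, mul_nonneg_iff_of_pos_right (by positivity), sub_nonneg]
  have hkey1 : cr - cq < Real.sqrt D := by
    rcases le_or_gt (cr - cq) 0 with h | h
    · exact h.trans_lt hsDpos
    · refine (Real.lt_sqrt h.le).mpr ?_
      rw [hDeq]; exact stmt_11_aux cq cr hcq hcr
  have hkey2 : cq - cr < Real.sqrt D := by
    rcases le_or_gt (cq - cr) 0 with h | h
    · exact h.trans_lt hsDpos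
    · refine (Real.lt_sqrt h.le).mpr ?_
      rw [hDeq]; exact stmt_11_aux' cq cr hcq hcr
  have hbpos : 0 < b := by rw [hb']; exact div_pos (by linarith) hs3pos
  have hcpos : 0 < c := by rw [hc']; exact div_pos (by linarith) hs3pos
  have hqr_eq : cq = cr ↔ q = r := by
    constructor
    · intro h
      have hinj := Real.strictAntiOn_cos.injOn
        (Set.mem_Icc.mpr ⟨by linarith, by linarith⟩)
        (Set.mem_Icc.mpr ⟨by linarith, by linarith⟩) h
      rw [div_eq_div_iff hq0.ne' hr0.ne'] at hinj
      exact (mul_left_cancel₀ hπ.ne' hinj).symm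
    · intro h; rw [hcq_def, hcr_def, h]
  refine ⟨hmain, fun hqr => ?_⟩
  have hcqcr : cq ≤ cr := by
    rw [hcq_def, hcr_def]
    exact Real.cos_le_cos_of_nonneg_of_le_pi hπr0.le hπqπ.le (by gcongr)
  have hbc : b ≤ c := hmain.mpr hcqcr
  have hbceq : b = c ↔ q = r := by
    rw [← hqr_eq]
    constructor
    · intro h
      have h0 : (cr - cq) * (2 / s3) = 0 := by rw [← hcb, h]; ring
      rcases mul_eq_zero.mp h0 with h' | h'
      · linarith
      · exact absurd h' (by positivity)
    · intro h
      have h0 : cr - cq = 0 := by rw [h]; ring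
      have := hcb; rw [h0] at this; linarith
  refine ⟨hbpos, hbc, hbceq, ?_, ?_⟩
  · exact Real.sqrt_le_one.mpr ((div_le_one hcpos).mpr hbc)
  · rw [Real.sqrt_eq_one, div_eq_one_iff_eq hcpos.ne', ← hbceq]
end

section
/- For all real numbers p, q, r with p ≥ 3, q ≥ 3 and r ≥ 4, each of the three quantities 2(2cos(π/p)cos(π/q) + cos(π/r)), 2(2cos(π/q)cos(π/r) + cos(π/p)), and 2(2cos(π/p)cos(π/r) + cos(π/q)) is at least 1 + √2, and in each case equality holds if and only if p = q = 3 and r = 4. -/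
open Real

lemma cos_aux (c x : ℝ) (hc : 1 ≤ c) (hx : c ≤ x) :
    Real.cos (π / c) ≤ Real.cos (π / x) ∧ (Real.cos (π / x) = Real.cos (π / c) ↔ x = c) := by
  have hc0 : 0 < c := by linarith
  have hx0 : 0 < x := by linarith
  have hπ : 0 < π := Real.pi_pos
  have h1 : π / x ≤ π / c := by
    apply div_le_div_of_nonneg_left hπ.le hc0 hx |>.trans_eq rfl
  have h2 : π / c ≤ π := by
    calc π / c ≤ π / 1 := div_le_div_of_nonneg_left hπ.le one_pos hc
    _ = π := by ring
  have hmx : π / x ∈ Set.Icc 0 π := ⟨by positivity, le_trans h1 h2⟩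
  have hmc : π / c ∈ Set.Icc 0 π := ⟨by positivity, h2⟩
  constructor
  · exact Real.strictAntiOn_cos.antitoneOn hmx hmc h1
  · constructor
    · intro h
      have h' := Real.injOn_cos hmx hmc h
      have h2 := (div_eq_div_iff hx0.ne' hc0.ne').mp h'
      exact (mul_left_cancel₀ Real.pi_ne_zero h2).symm
    · rintro rfl; rfl

lemma alg_aux (a b c : ℝ) (ha : 1/2 ≤ a) (hb : 1/2 ≤ b) (hc : Real.sqrt 2 / 2 ≤ c) :
    1 + Real.sqrt 2 ≤ 2 * (2 * a * b + c) ∧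
      (2 * (2 * a * b + c) = 1 + Real.sqrt 2 ↔ a = 1/2 ∧ b = 1/2 ∧ c = Real.sqrt 2 / 2) := by
  have hs : Real.sqrt 2 ^ 2 = 2 := Real.sq_sqrt (by norm_num)
  have hs1 : 1 ≤ Real.sqrt 2 := by nlinarith [Real.sqrt_nonneg 2]
  have hab : 1/4 ≤ a * b := by nlinarith
  constructor
  · nlinarith
  constructor
  · intro h
    have hc' : c = Real.sqrt 2 / 2 := by nlinarith
    have hab' : a * b = 1/4 := by nlinarith
    have ha' : a = 1/2 := by nlinarith
    exact ⟨ha', by nlinarith, hc'⟩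
  · rintro ⟨rfl, rfl, rfl⟩; ring

lemma alg_aux2 (a b c : ℝ) (ha : 1/2 ≤ a) (hb : 1/2 ≤ b) (hc : Real.sqrt 2 / 2 ≤ c) :
    1 + Real.sqrt 2 ≤ 2 * (2 * b * c + a) ∧
      (2 * (2 * b * c + a) = 1 + Real.sqrt 2 ↔ a = 1/2 ∧ b = 1/2 ∧ c = Real.sqrt 2 / 2) := by
  have hs : Real.sqrt 2 ^ 2 = 2 := Real.sq_sqrt (by norm_num)
  have hs1 : 1 ≤ Real.sqrt 2 := by nlinarith [Real.sqrt_nonneg 2]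
  have hbc : Real.sqrt 2 / 4 ≤ b * c := by nlinarith
  constructor
  · nlinarith
  constructor
  · intro h
    have ha' : a = 1/2 := by nlinarith
    have hbc' : b * c = Real.sqrt 2 / 4 := by nlinarith
    have hb' : b = 1/2 := by nlinarith
    exact ⟨ha', hb', by nlinarith⟩
  · rintro ⟨rfl, rfl, rfl⟩; ring

set_option maxHeartbeats 1000000 in
theorem stmt_13 (p q r : ℝ) (hp : 3 ≤ p) (hq : 3 ≤ q) (hr : 4 ≤ r) :
    (1 + Real.sqrt 2 ≤ 2 * (2 * Real.cos (π / p) * Real.cos (π / q) + Real.cos (π / r)) ∧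
      (2 * (2 * Real.cos (π / p) * Real.cos (π / q) + Real.cos (π / r)) = 1 + Real.sqrt 2 ↔
        p = 3 ∧ q = 3 ∧ r = 4)) ∧
    (1 + Real.sqrt 2 ≤ 2 * (2 * Real.cos (π / q) * Real.cos (π / r) + Real.cos (π / p)) ∧
      (2 * (2 * Real.cos (π / q) * Real.cos (π / r) + Real.cos (π / p)) = 1 + Real.sqrt 2 ↔
        p = 3 ∧ q = 3 ∧ r = 4)) ∧
    (1 + Real.sqrt 2 ≤ 2 * (2 * Real.cos (π / p) * Real.cos (π / r) + Real.cos (π / q)) ∧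
      (2 * (2 * Real.cos (π / p) * Real.cos (π / r) + Real.cos (π / q)) = 1 + Real.sqrt 2 ↔
        p = 3 ∧ q = 3 ∧ r = 4)) := by
  obtain ⟨hple, hpeq⟩ := cos_aux 3 p (by norm_num) hp
  obtain ⟨hqle, hqeq⟩ := cos_aux 3 q (by norm_num) hq
  obtain ⟨hrle, hreq⟩ := cos_aux 4 r (by norm_num) hr
  rw [Real.cos_pi_div_three] at hple hpeq
  rw [Real.cos_pi_div_three] at hqle hqeq
  rw [show (π : ℝ) / 4 = π / 4 from rfl, Real.cos_pi_div_four] at hrle hreq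
  obtain ⟨h1, h1e⟩ := alg_aux _ _ _ hple hqle hrle
  obtain ⟨h2, h2e⟩ := alg_aux2 _ _ _ hple hqle hrle
  obtain ⟨h3, h3e⟩ := alg_aux2 _ _ _ hqle hple hrle
  refine ⟨⟨h1, ?_⟩, ⟨h2, ?_⟩, h3, ?_⟩
  · rw [h1e, hpeq, hqeq, hreq]
  · rw [h2e, hpeq, hqeq, hreq]
  · rw [h3e, hpeq, hqeq, hreq]
    exact ⟨fun ⟨a,b,c⟩ => ⟨b,a,c⟩, fun ⟨a,b,c⟩ => ⟨b,a,c⟩⟩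
end

section
/- The minimum of the set of real numbers {4cos(π/q)cos(π/r) : q, r integers with 5 ≤ q ≤ r} ∪ {2(2cos(π/p)cos(π/q) + cos(π/r)), 2(2cos(π/q)cos(π/r) + cos(π/p)), 2(2cos(π/p)cos(π/r) + cos(π/q)) : p, q, r integers with 3 ≤ p ≤ q ≤ r and r ≥ 4} is 1 + √2, attained exactly at (p,q,r) = (3,3,4). Consequently, since |trace| = 2cosh(ℓ/2) relates the trace of a hyperbolic element to the length ℓ of its closed geodesic, the shortest figure eight geodesic on a triangle group orbifold without punctures has length 2·arcosh((1+√2)/2) = 1.26595…, attained uniquely on the (3,3,4)-triangle group orbifold. -/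
open Real

/-- The inverse hyperbolic cosine, `arcosh x = log (x + √(x² − 1))` (for `x ≥ 1`). -/
noncomputable def arcosh (x : ℝ) : ℝ := Real.log (x + Real.sqrt (x ^ 2 - 1))

/-- The set of absolute traces of the hyperbolic elements of triangle groups whose axes
project to figure eight geodesics on triangle group orbifolds without punctures. -/
noncomputable def fig8Traces : Set ℝ :=
  {x : ℝ | ∃ q r : ℤ, 5 ≤ q ∧ q ≤ r ∧ x = 4 * Real.cos (π / q) * Real.cos (π / r)} ∪
    {x : ℝ | ∃ p q r : ℤ, 3 ≤ p ∧ p ≤ q ∧ q ≤ r ∧ 4 ≤ r ∧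
      (x = 2 * (2 * Real.cos (π / p) * Real.cos (π / q) + Real.cos (π / r)) ∨
        x = 2 * (2 * Real.cos (π / q) * Real.cos (π / r) + Real.cos (π / p)) ∨
        x = 2 * (2 * Real.cos (π / p) * Real.cos (π / r) + Real.cos (π / q)))}


lemma cos_le_cos_int {m n : ℤ} (hm : 2 ≤ m) (hmn : m ≤ n) :
    Real.cos (π / m) ≤ Real.cos (π / n) := by
  have hm0 : (0:ℝ) < (m:ℝ) := by exact_mod_cast (by omega : (0:ℤ) < m)
  have hn0 : (0:ℝ) < (n:ℝ) := by exact_mod_cast (by omega : (0:ℤ) < n)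
  have hmn' : (m:ℝ) ≤ (n:ℝ) := by exact_mod_cast hmn
  have h1 : π / (n:ℝ) ≤ π / (m:ℝ) := by gcongr
  have h2 : 0 ≤ π / (n:ℝ) := by positivity
  have h3 : π / (m:ℝ) ≤ π := by
    rw [div_le_iff₀ hm0]
    have h2m : (2:ℝ) ≤ (m:ℝ) := by exact_mod_cast hm
    nlinarith [Real.pi_pos]
  exact Real.cos_le_cos_of_nonneg_of_le_pi h2 h3 h1

lemma cos_lt_cos_int {m n : ℤ} (hm : 2 ≤ m) (hmn : m < n) :
    Real.cos (π / m) < Real.cos (π / n) := by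
  have hm0 : (0:ℝ) < (m:ℝ) := by exact_mod_cast (by omega : (0:ℤ) < m)
  have hn0 : (0:ℝ) < (n:ℝ) := by exact_mod_cast (by omega : (0:ℤ) < n)
  have hmn' : (m:ℝ) < (n:ℝ) := by exact_mod_cast hmn
  have h1 : π / (n:ℝ) < π / (m:ℝ) := by apply div_lt_div_of_pos_left Real.pi_pos hm0 hmn'
  have h2 : 0 ≤ π / (n:ℝ) := by positivity
  have h3 : π / (m:ℝ) ≤ π := by
    rw [div_le_iff₀ hm0]
    have h2m : (2:ℝ) ≤ (m:ℝ) := by exact_mod_cast hm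
    nlinarith [Real.pi_pos]
  exact Real.cos_lt_cos_of_nonneg_of_le_pi h2 h3 h1

lemma eq_of_cos_eq_int {m n : ℤ} (hm : 2 ≤ m) (hmn : m ≤ n)
    (h : Real.cos (π / m) = Real.cos (π / n)) : m = n := by
  rcases eq_or_lt_of_le hmn with h' | h'
  · exact h'
  · exact absurd h (ne_of_lt (cos_lt_cos_int hm h'))

lemma cos3le {m : ℤ} (h : 3 ≤ m) : 1/2 ≤ Real.cos (π / m) := by
  have := cos_le_cos_int (m := 3) (by norm_num) h
  norm_num [Real.cos_pi_div_three] at this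
  convert this using 2 <;> norm_num

lemma cos4le {m : ℤ} (h : 4 ≤ m) : Real.sqrt 2 / 2 ≤ Real.cos (π / m) := by
  have := cos_le_cos_int (m := 4) (by norm_num) h
  norm_num [Real.cos_pi_div_four] at this
  convert this using 2 <;> norm_num

lemma cos5le {m : ℤ} (h : 5 ≤ m) : (1 + Real.sqrt 5) / 4 ≤ Real.cos (π / m) := by
  have := cos_le_cos_int (m := 5) (by norm_num) h
  norm_num [Real.cos_pi_div_five] at this
  convert this using 2 <;> norm_num

lemma eq3 {m : ℤ} (h : 3 ≤ m) (he : Real.cos (π / m) = 1/2) : m = 3 := by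
  refine (eq_of_cos_eq_int (by norm_num) h ?_).symm
  rw [he]
  norm_num [Real.cos_pi_div_three]

lemma eq4 {m : ℤ} (h : 4 ≤ m) (he : Real.cos (π / m) = Real.sqrt 2 / 2) : m = 4 := by
  refine (eq_of_cos_eq_int (by norm_num) h ?_).symm
  rw [he]
  norm_num [Real.cos_pi_div_four]

lemma sqrt2_facts : Real.sqrt 2 ^ 2 = 2 ∧ (1:ℝ) ≤ Real.sqrt 2 ∧ Real.sqrt 2 ≤ 17/12 := by
  have h1 : Real.sqrt 2 ^ 2 = 2 := Real.sq_sqrt (by norm_num)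
  have h0 : (0:ℝ) ≤ Real.sqrt 2 := Real.sqrt_nonneg 2
  refine ⟨h1, by nlinarith, by nlinarith [sq_nonneg (Real.sqrt 2 - 3/2)]⟩

lemma fig8_758 : 2 * (2 * Real.cos (π / ((3:ℤ):ℝ)) * Real.cos (π / ((3:ℤ):ℝ)) +
    Real.cos (π / ((4:ℤ):ℝ))) = 1 + Real.sqrt 2 := by
  norm_num [Real.cos_pi_div_three, Real.cos_pi_div_four]
  ring

set_option maxHeartbeats 1000000 in
theorem stmt_14 :
    IsLeast fig8Traces (1 + Real.sqrt 2) ∧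
      (∀ q r : ℤ, 5 ≤ q → q ≤ r →
        4 * Real.cos (π / q) * Real.cos (π / r) ≠ 1 + Real.sqrt 2) ∧
      (∀ p q r : ℤ, 3 ≤ p → p ≤ q → q ≤ r → 4 ≤ r →
        ((2 * (2 * Real.cos (π / p) * Real.cos (π / q) + Real.cos (π / r)) = 1 + Real.sqrt 2 ∨
          2 * (2 * Real.cos (π / q) * Real.cos (π / r) + Real.cos (π / p)) = 1 + Real.sqrt 2 ∨
          2 * (2 * Real.cos (π / p) * Real.cos (π / r) + Real.cos (π / q)) = 1 + Real.sqrt 2) ↔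
          p = 3 ∧ q = 3 ∧ r = 4)) ∧
      2 * Real.cosh (2 * _root_.arcosh ((1 + Real.sqrt 2) / 2) / 2) = 1 + Real.sqrt 2 := by
  obtain ⟨hs2, hs1, hs17⟩ := sqrt2_facts
  have hs0 : (0:ℝ) ≤ Real.sqrt 2 := by linarith
  set s := Real.sqrt 2 with hs
  -- strict lower bound for family A
  have famA : ∀ q r : ℤ, 5 ≤ q → q ≤ r →
      1 + s < 4 * Real.cos (π / q) * Real.cos (π / r) := by
    intro q r hq hqr
    have ha := cos5le hq
    have hb := cos5le (le_trans hq hqr)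
    set a := Real.cos (π / q)
    set b := Real.cos (π / r)
    have ht5 : Real.sqrt 5 ^ 2 = 5 := Real.sq_sqrt (by norm_num)
    have ht50 : (0:ℝ) ≤ Real.sqrt 5 := Real.sqrt_nonneg 5
    have ht52 : (2:ℝ) ≤ Real.sqrt 5 := by nlinarith
    set t := Real.sqrt 5
    have hc0 : (0:ℝ) ≤ (1 + t)/4 := by linarith
    have hab : (1+t)/4 * ((1+t)/4) ≤ a * b := by
      nlinarith [mul_nonneg (sub_nonneg.2 ha) (sub_nonneg.2 hb),
        mul_nonneg hc0 (sub_nonneg.2 ha), mul_nonneg hc0 (sub_nonneg.2 hb)]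
    nlinarith
  refine ⟨⟨?_, ?_⟩, ?_, ?_, ?_⟩
  · -- membership
    right
    exact ⟨3, 3, 4, by norm_num, by norm_num, by norm_num, by norm_num, Or.inl fig8_758.symm⟩
  · -- lower bound
    rintro x (⟨q, r, hq, hqr, rfl⟩ | ⟨p, q, r, hp, hpq, hqr, hr, hx⟩)
    · exact le_of_lt (famA q r hq hqr)
    · have ha := cos3le hp
      have hb := cos3le (le_trans hp hpq)
      have hc := cos4le hr
      set a := Real.cos (π / p)
      set b := Real.cos (π / q)
      set c := Real.cos (π / r)
      rcases hx with rfl | rfl | rfl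
      · nlinarith [mul_nonneg (by linarith : (0:ℝ) ≤ a - 1/2) (by linarith : (0:ℝ) ≤ b - 1/2)]
      · nlinarith [mul_nonneg (by linarith : (0:ℝ) ≤ b - 1/2) (by linarith : (0:ℝ) ≤ c - s/2)]
      · nlinarith [mul_nonneg (by linarith : (0:ℝ) ≤ a - 1/2) (by linarith : (0:ℝ) ≤ c - s/2)]
  · -- family A never attains
    intro q r hq hqr
    exact ne_of_gt (famA q r hq hqr)
  · -- characterization of equality
    intro p q r hp hpq hqr hr
    constructor
    · have ha := cos3le hp
      have hb := cos3le (le_trans hp hpq)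
      have hc := cos4le hr
      set a := Real.cos (π / p) with hA
      set b := Real.cos (π / q) with hB
      set c := Real.cos (π / r) with hC
      have hq3 : 3 ≤ q := le_trans hp hpq
      rintro (h | h | h)
      · have h1 : 1 ≤ 4*a*b := by
          nlinarith [mul_nonneg (by linarith : (0:ℝ) ≤ a - 1/2) (by linarith : (0:ℝ) ≤ b - 1/2)]
        have hceq : c = s/2 := by linarith
        have habe : 4*a*b = 1 := by linarith
        have hae : a = 1/2 := by
          have : a ≤ 1/2 := by nlinarith
          linarith
        have hbe : b = 1/2 := by
          have : b ≤ 1/2 := by nlinarith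
          linarith
        exact ⟨eq3 hp hae, eq3 hq3 hbe, eq4 hr (by rw [← hC, hceq, hs])⟩
      · have h1 : s ≤ 4*b*c := by
          nlinarith [mul_nonneg (by linarith : (0:ℝ) ≤ b - 1/2) (by linarith : (0:ℝ) ≤ c - s/2)]
        have hae : a = 1/2 := by linarith
        have hbce : 4*b*c = s := by linarith
        have hbe : b = 1/2 := by
          have : b ≤ 1/2 := by nlinarith [mul_nonneg (by linarith : (0:ℝ) ≤ b) (by linarith : (0:ℝ) ≤ 2*c - s)]
          linarith
        have hceq : c = s/2 := by
          rw [hbe] at hbce; linarith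
        have hq := eq3 hq3 hbe
        refine ⟨eq3 hp hae, hq, eq4 hr (by rw [← hC, hceq, hs])⟩
      · have h1 : s ≤ 4*a*c := by
          nlinarith [mul_nonneg (by linarith : (0:ℝ) ≤ a - 1/2) (by linarith : (0:ℝ) ≤ c - s/2)]
        have hbe : b = 1/2 := by linarith
        have hace : 4*a*c = s := by linarith
        have hae : a = 1/2 := by
          have : a ≤ 1/2 := by nlinarith [mul_nonneg (by linarith : (0:ℝ) ≤ a) (by linarith : (0:ℝ) ≤ 2*c - s)]
          linarith
        have hceq : c = s/2 := by
          rw [hae] at hace; linarith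
        exact ⟨eq3 hp hae, eq3 hq3 hbe, eq4 hr (by rw [← hC, hceq, hs])⟩
    · rintro ⟨rfl, rfl, rfl⟩
      exact Or.inl fig8_758
  · -- cosh computation
    set t : ℝ := (1 + s) / 2 with ht
    have ht1 : (1:ℝ) ≤ t := by rw [ht]; linarith
    have htsq : (0:ℝ) ≤ t^2 - 1 := by nlinarith
    set u := Real.sqrt (t^2 - 1) with hu
    have hu0 : 0 ≤ u := Real.sqrt_nonneg _
    have hu2 : u^2 = t^2 - 1 := Real.sq_sqrt htsq
    have hx0 : 0 < t + u := by linarith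
    have harg : 2 * _root_.arcosh t / 2 = _root_.arcosh t := by ring
    rw [harg]
    have hmul : (t + u) * (t - u) = 1 := by nlinarith
    have hinv : (t + u)⁻¹ = t - u := by
      field_simp
      nlinarith
    rw [_root_.arcosh, Real.cosh_eq, Real.exp_log hx0, Real.exp_neg, Real.exp_log hx0, hinv]
    rw [ht]
    ring
end
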